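/- For every real k ≥ 5/3, the first k-Ramanujan prime satisfies R₁⁽ᵏ⁾ = 2. -/

import Mathlib

open Real

/-- The prime counting function `π` extended to the reals:
`primePi x` is the number of primes `p ≤ x`. -/
noncomputable def primePi (x : ℝ) : ℕ := Nat.primeCounting ⌊x⌋₊

/-- The first `k`-Ramanujan prime `R₁⁽ᵏ⁾`: the least positive integer `m` such that
`π(x) - π(x/k) ≥ 1` for every real `x ≥ m`. -/
noncomputable def firstRamanujanPrime (k : ℝ) : ℕ :=
  sInf {m : ℕ | 0 < m ∧ ∀ x : ℝ, (m : ℝ) ≤ x → primePi (x / k) < primePi x}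

/-- The `n`-th prime number, with `nthPrime 1 = 2`, `nthPrime 2 = 3`, … -/
noncomputable def nthPrime (n : ℕ) : ℕ := Nat.nth Nat.Prime (n - 1)

set_option maxHeartbeats 1000000

open ArithmeticFunction Finset


noncomputable def LF (n : ℕ) : ℝ := Real.log (Nat.factorial n : ℝ)

lemma log_ge_one_sub_inv {x : ℝ} (hx : 0 < x) : 1 - 1/x ≤ Real.log x := by
  have h := Real.log_le_sub_one_of_pos (show (0:ℝ) < 1/x by positivity)
  rw [Real.log_div one_ne_zero (ne_of_gt hx), Real.log_one] at h
  linarith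

lemma LF_step (n : ℕ) : LF (n+1) = LF n + Real.log ((n:ℝ)+1) := by
  unfold LF
  rw [Nat.factorial_succ, Nat.cast_mul, Real.log_mul (by positivity) (by
    exact_mod_cast Nat.cast_pos.2 (Nat.factorial_pos n) |>.ne')]
  push_cast; ring

lemma divisors_eq_filter (n : ℕ) (hn : 0 < n) :
    n.divisors = (Icc 1 n).filter (· ∣ n) := by
  ext d
  simp only [Nat.mem_divisors, mem_filter, mem_Icc]
  constructor
  · rintro ⟨hd, _⟩
    refine ⟨⟨?_, Nat.le_of_dvd hn hd⟩, hd⟩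
    rcases Nat.eq_zero_or_pos d with rfl | h
    · exact absurd (Nat.eq_zero_of_zero_dvd hd) (by omega)
    · omega
  · rintro ⟨_, hd⟩
    exact ⟨hd, by omega⟩

lemma LF_eq (N : ℕ) : LF N = ∑ d ∈ Icc 1 N, Λ d * ((N / d : ℕ) : ℝ) := by
  induction N with
  | zero => simp [LF]
  | succ N ih =>
    rw [LF_step, ih]
    have hIcc : Icc 1 (N+1) = insert (N+1) (Icc 1 N) := by
      ext x; simp only [mem_Icc, mem_insert]; omega
    rw [hIcc, Finset.sum_insert (by simp)]
    have hsum : ∀ d ∈ Icc 1 N, Λ d * (((N+1) / d : ℕ) : ℝ)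
        = Λ d * ((N / d : ℕ) : ℝ) + if d ∣ N+1 then Λ d else 0 := by
      intro d _
      rw [Nat.succ_div]
      split <;> push_cast <;> ring
    rw [Finset.sum_congr rfl hsum, Finset.sum_add_distrib]
    have hdiv : ∑ d ∈ Icc 1 N, (if d ∣ N+1 then Λ d else 0)
        = ∑ d ∈ (Icc 1 N).filter (· ∣ N+1), Λ d := (Finset.sum_filter _ _).symm
    have hself : (N+1) / (N+1) = 1 := Nat.div_self (by omega)
    have hfil : (N+1).divisors = insert (N+1) ((Icc 1 N).filter (· ∣ N+1)) := by
      rw [divisors_eq_filter _ (by omega), hIcc, Finset.filter_insert, if_pos dvd_rfl]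
    have hlog : Real.log ((N:ℝ)+1) = ∑ i ∈ (N+1).divisors, Λ i := by
      rw [vonMangoldt_sum]; push_cast; ring_nf
    rw [hdiv, hlog, hfil, Finset.sum_insert (by simp), hself]
    push_cast
    ring

-- Stirling-type bounds
lemma LF_lower (n : ℕ) (hn : 1 ≤ n) : (n:ℝ) * Real.log n - n + 1 ≤ LF n := by
  induction n with
  | zero => omega
  | succ n ih =>
    rcases Nat.eq_or_lt_of_le hn with h | h
    · rw [← h]; simp [LF]
    · have hn1 : 1 ≤ n := by omega
      have ih' := ih hn1
      have h0 : (0:ℝ) < n := by exact_mod_cast hn1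
      have hlog : (n:ℝ) * (Real.log ((n:ℝ)+1) - Real.log n) ≤ 1 := by
        have hl : Real.log (((n:ℝ)+1)/n) ≤ ((n:ℝ)+1)/n - 1 :=
          Real.log_le_sub_one_of_pos (by positivity)
        rw [Real.log_div (by positivity) (by positivity)] at hl
        have h2 : ((n:ℝ)+1)/n - 1 = 1/n := by field_simp; ring
        rw [h2] at hl
        calc (n:ℝ) * (Real.log ((n:ℝ)+1) - Real.log n) ≤ (n:ℝ) * (1/n) :=
              mul_le_mul_of_nonneg_left hl (le_of_lt h0)
          _ = 1 := by field_simp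
      rw [LF_step]
      push_cast
      nlinarith [hlog, ih']

lemma LF_upper (n : ℕ) (hn : 1 ≤ n) : LF n ≤ (n:ℝ) * Real.log n - n + 1 + Real.log n := by
  induction n with
  | zero => omega
  | succ n ih =>
    rcases Nat.eq_or_lt_of_le hn with h | h
    · rw [← h]; simp [LF]
    · have hn1 : 1 ≤ n := by omega
      have ih' := ih hn1
      have h0 : (0:ℝ) < n := by exact_mod_cast hn1
      have hup : 1 ≤ ((n:ℝ)+1) * (Real.log ((n:ℝ)+1) - Real.log n) := by
        have hl : 1 - 1/(((n:ℝ)+1)/n) ≤ Real.log (((n:ℝ)+1)/n) :=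
          log_ge_one_sub_inv (by positivity)
        rw [Real.log_div (by positivity) (by positivity)] at hl
        have h2 : 1 - 1/(((n:ℝ)+1)/n) = 1/((n:ℝ)+1) := by field_simp; ring
        rw [h2] at hl
        calc (1:ℝ) = ((n:ℝ)+1) * (1/((n:ℝ)+1)) := by field_simp
          _ ≤ ((n:ℝ)+1) * (Real.log ((n:ℝ)+1) - Real.log n) :=
            mul_le_mul_of_nonneg_left hl (by linarith)
      rw [LF_step]
      push_cast
      nlinarith [hup, ih', h0]

noncomputable def psi (N : ℕ) : ℝ := ∑ d ∈ Icc 1 N, Λ d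
noncomputable def EE (N : ℕ) : ℝ := LF N - LF (N/2) - LF (N/3) - LF (N/5) + LF (N/30)


-- extension of LF_eq to a larger index set
lemma LF_eq' (a N : ℕ) (h : a ≤ N) : LF a = ∑ d ∈ Icc 1 N, Λ d * ((a / d : ℕ) : ℝ) := by
  rw [LF_eq a]
  apply Finset.sum_subset (Finset.Icc_subset_Icc_right h)
  intro d hd hnd
  simp only [mem_Icc] at hd hnd
  have : a < d := by omega
  rw [Nat.div_eq_of_lt this]
  simp

lemma EE_le_psi (N : ℕ) : EE N ≤ psi N := by
  unfold EE psi
  rw [LF_eq N, LF_eq' (N/2) N (Nat.div_le_self _ _), LF_eq' (N/3) N (Nat.div_le_self _ _),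
    LF_eq' (N/5) N (Nat.div_le_self _ _), LF_eq' (N/30) N (Nat.div_le_self _ _)]
  rw [← Finset.sum_sub_distrib, ← Finset.sum_sub_distrib, ← Finset.sum_sub_distrib,
    ← Finset.sum_add_distrib]
  apply Finset.sum_le_sum
  intro d hd
  have hΛ : 0 ≤ Λ d := vonMangoldt_nonneg
  have hd2 : N/2/d = N/d/2 := by rw [Nat.div_div_eq_div_mul, Nat.div_div_eq_div_mul, Nat.mul_comm]
  have hd3 : N/3/d = N/d/3 := by rw [Nat.div_div_eq_div_mul, Nat.div_div_eq_div_mul, Nat.mul_comm]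
  have hd5 : N/5/d = N/d/5 := by rw [Nat.div_div_eq_div_mul, Nat.div_div_eq_div_mul, Nat.mul_comm]
  have hd30 : N/30/d = N/d/30 := by rw [Nat.div_div_eq_div_mul, Nat.div_div_eq_div_mul, Nat.mul_comm]
  rw [hd2, hd3, hd5, hd30]
  set M := N/d with hM
  have hnat : M + M/30 ≤ M/2 + M/3 + M/5 + 1 := by omega
  have hcast : (M:ℝ) + (M/30 : ℕ) ≤ (M/2 : ℕ) + (M/3 : ℕ) + (M/5 : ℕ) + 1 := by
    exact_mod_cast hnat
  nlinarith [hΛ, hcast]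

-- psi = theta-part + prime-power-part
noncomputable def th (N : ℕ) : ℝ := ∑ p ∈ (Icc 1 N).filter Nat.Prime, Real.log p

lemma psi_split (N : ℕ) :
    psi N = th N + ∑ d ∈ (Icc 1 N).filter (fun d => ¬ d.Prime), Λ d := by
  unfold psi th
  rw [← Finset.sum_filter_add_sum_filter_not (Icc 1 N) Nat.Prime Λ]
  congr 1
  apply Finset.sum_congr rfl
  intro p hp
  simp only [mem_filter] at hp
  exact vonMangoldt_apply_prime hp.2


lemma PP_bound (N : ℕ) (hN : 2 ≤ N) :
    ∑ d ∈ (Icc 1 N).filter (fun d => ¬ d.Prime), Λ d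
      ≤ ((Nat.sqrt N : ℝ) * (Nat.log 2 N : ℝ)) * (Real.log N / 2) := by
  classical
  have hzero : ∀ d ∈ (Icc 1 N).filter (fun d => ¬ d.Prime ∧ ¬ IsPrimePow d), Λ d = 0 := by
    intro d hd
    simp only [mem_filter] at hd
    by_contra h
    exact hd.2.2 (vonMangoldt_ne_zero_iff.1 h)
  have hsplit : ∑ d ∈ (Icc 1 N).filter (fun d => ¬ d.Prime), Λ d
      = ∑ d ∈ (Icc 1 N).filter (fun d => ¬ d.Prime ∧ IsPrimePow d), Λ d := by
    rw [← Finset.sum_filter_add_sum_filter_not ((Icc 1 N).filter (fun d => ¬ d.Prime))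
      IsPrimePow Λ, Finset.filter_filter, Finset.filter_filter, Finset.sum_eq_zero hzero]
    ring
  rw [hsplit]
  set s := (Icc 1 N).filter (fun d => ¬ d.Prime ∧ IsPrimePow d) with hs
  have hrep : ∀ d ∈ s, ∃ p k : ℕ, p.Prime ∧ 2 ≤ k ∧ p ^ k = d := by
    intro d hd
    simp only [hs, mem_filter, mem_Icc] at hd
    obtain ⟨⟨hd1, hdN⟩, hnp, hpp⟩ := hd
    obtain ⟨p, k, hp, hk, rfl⟩ := hpp
    have hp' : p.Prime := hp.nat_prime
    refine ⟨p, k, hp', ?_, rfl⟩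
    match k, hk with
    | 1, _ => rw [pow_one] at hnp; exact absurd hp' hnp
    | (n+2), _ => omega
  have hbound : ∀ d ∈ s, Λ d ≤ Real.log N / 2 := by
    intro d hd
    have hdN : d ≤ N := by
      simp only [hs, mem_filter, mem_Icc] at hd; exact hd.1.2
    obtain ⟨p, k, hp, hk2, rfl⟩ := hrep d hd
    rw [vonMangoldt_apply_pow (by omega), vonMangoldt_apply_prime hp]
    have hppN : p * p ≤ N := by
      have h1 : p * p ≤ p ^ k := by
        calc p * p = p ^ 2 := by ring
          _ ≤ p ^ k := Nat.pow_le_pow_right (by have := hp.two_le; omega) hk2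
      exact h1.trans hdN
    have hp0 : (0:ℝ) < p := by exact_mod_cast hp.pos
    have h2 : 2 * Real.log p = Real.log ((p:ℝ) * p) := by
      rw [Real.log_mul (ne_of_gt hp0) (ne_of_gt hp0)]; ring
    have h3 : Real.log ((p:ℝ)*p) ≤ Real.log N := by
      apply Real.log_le_log (by positivity)
      exact_mod_cast hppN
    linarith
  have hcard : s.card ≤ Nat.sqrt N * Nat.log 2 N := by
    have hinj : s.card ≤ ((Icc 2 (Nat.sqrt N)) ×ˢ (Icc 2 (Nat.log 2 N))).card := by
      apply Finset.card_le_card_of_injOn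
        (fun d => (d.minFac, d.factorization d.minFac))
      · intro d hd
        have hdN : d ≤ N := by
          simp only [hs, Finset.mem_coe, mem_filter, mem_Icc] at hd; exact hd.1.2
        obtain ⟨p, k, hp, hk2, rfl⟩ := hrep d hd
        have hmf : (p^k).minFac = p := by
          rw [Nat.pow_minFac (by omega), hp.minFac_eq]
        have hfac : (p^k).factorization p = k := by
          rw [hp.factorization_pow, Finsupp.single_eq_same]
        simp only [Finset.mem_coe, Finset.mem_product, mem_Icc, hmf, hfac]
        refine ⟨⟨hp.two_le, ?_⟩, hk2, ?_⟩
        · rw [Nat.le_sqrt]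
          calc p * p = p ^ 2 := by ring
            _ ≤ p ^ k := Nat.pow_le_pow_right (by have := hp.two_le; omega) hk2
            _ ≤ N := hdN
        · apply (Nat.le_log_iff_pow_le (by norm_num) (by omega)).mpr
          calc 2 ^ k ≤ p ^ k := Nat.pow_le_pow_left hp.two_le k
            _ ≤ N := hdN
      · intro d1 hd1 d2 hd2 heq
        obtain ⟨p1, k1, hp1, hk1, hr1⟩ := hrep d1 hd1
        obtain ⟨p2, k2, hp2, hk2, hr2⟩ := hrep d2 hd2
        subst hr1; subst hr2
        have hmf1 : (p1^k1).minFac = p1 := by rw [Nat.pow_minFac (by omega), hp1.minFac_eq]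
        have hmf2 : (p2^k2).minFac = p2 := by rw [Nat.pow_minFac (by omega), hp2.minFac_eq]
        have hfac1 : (p1^k1).factorization p1 = k1 := by
          rw [hp1.factorization_pow, Finsupp.single_eq_same]
        have hfac2 : (p2^k2).factorization p2 = k2 := by
          rw [hp2.factorization_pow, Finsupp.single_eq_same]
        simp only [Prod.mk.injEq, hmf1, hmf2, hfac1, hfac2] at heq
        rw [heq.1, heq.2]
    calc s.card ≤ _ := hinj
      _ ≤ Nat.sqrt N * Nat.log 2 N := by
        rw [Finset.card_product, Nat.card_Icc, Nat.card_Icc]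
        apply Nat.mul_le_mul <;> omega
  have hlogN : 0 ≤ Real.log N / 2 := by
    have h1 : (1:ℝ) ≤ N := by exact_mod_cast (by omega : 1 ≤ N)
    have := Real.log_nonneg h1
    linarith
  calc ∑ d ∈ s, Λ d ≤ s.card • (Real.log N / 2) := Finset.sum_le_card_nsmul s Λ _ hbound
    _ = (s.card : ℝ) * (Real.log N / 2) := by rw [nsmul_eq_mul]
    _ ≤ ((Nat.sqrt N : ℝ) * (Nat.log 2 N : ℝ)) * (Real.log N / 2) := by
        apply mul_le_mul_of_nonneg_right _ hlogN
        exact_mod_cast hcard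


lemma log_succ_ge (k : ℕ) (hk : 1 ≤ k) :
    1/((k:ℝ)+1) ≤ Real.log ((k:ℝ)+1) - Real.log k := by
  have hk0 : (0:ℝ) < k := by exact_mod_cast hk
  have h := log_ge_one_sub_inv (show (0:ℝ) < ((k:ℝ)+1)/k by positivity)
  rw [Real.log_div (by positivity) (ne_of_gt hk0)] at h
  have h2 : 1 - 1/(((k:ℝ)+1)/k) = 1/((k:ℝ)+1) := by
    rw [one_div_div]
    field_simp; ring
  linarith [h2 ▸ h]

lemma log_ratio_ge (a b : ℕ) (ha : 1 ≤ a) (hab : a ≤ b) :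
    ∑ k ∈ Finset.Ico a b, 1/((k:ℝ)+1) ≤ Real.log b - Real.log a := by
  induction b with
  | zero => omega
  | succ b ih =>
    rcases Nat.eq_or_lt_of_le hab with h | h
    · rw [h]; simp
    · have hab' : a ≤ b := by omega
      have ih' := ih hab'
      rw [Finset.sum_Ico_succ_top hab']
      have := log_succ_ge b (by omega)
      push_cast
      push_cast at ih' this
      linarith

-- numeric: log 3 and log 5 lower bounds
lemma log3_lb : (1.0917481:ℝ) ≤ Real.log 3 := by
  have h := log_ratio_ge 24 36 (by norm_num) (by norm_num)
  have he : Real.log 36 - Real.log 24 = Real.log 3 - Real.log 2 := by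
    rw [show (36:ℝ) = 12*3 by norm_num, show (24:ℝ) = 12*2 by norm_num,
      Real.log_mul (by norm_num) (by norm_num), Real.log_mul (by norm_num) (by norm_num)]
    ring
  have hsum : (0.398601:ℝ) ≤ ∑ k ∈ Finset.Ico (24:ℕ) 36, 1/((k:ℝ)+1) := by
    rw [Finset.sum_Ico_eq_sum_range]
    norm_num [Finset.sum_range_succ]
  have hl2 := Real.log_two_gt_d9
  push_cast at h
  rw [he] at h
  linarith [hsum, h, hl2]

lemma log5_lb : (1.6053232:ℝ) ≤ Real.log 5 := by
  have h := log_ratio_ge 24 30 (by norm_num) (by norm_num)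
  have he : Real.log 30 - Real.log 24 = Real.log 5 - 2 * Real.log 2 := by
    rw [show (30:ℝ) = 6*5 by norm_num, show (24:ℝ) = 6*(2*2) by norm_num,
      Real.log_mul (by norm_num) (by norm_num), Real.log_mul (by norm_num) (by norm_num),
      Real.log_mul (by norm_num) (by norm_num)]
    ring
  have hsum : (0.2190289:ℝ) ≤ ∑ k ∈ Finset.Ico (24:ℕ) 30, 1/((k:ℝ)+1) := by
    rw [Finset.sum_Ico_eq_sum_range]
    norm_num [Finset.sum_range_succ]
  have hl2 := Real.log_two_gt_d9
  push_cast at h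
  rw [he] at h
  linarith [hsum, h, hl2]

-- log x ≤ x / e
lemma log_le_div_e {x : ℝ} (hx : 0 < x) : Real.log x ≤ x / Real.exp 1 := by
  have h := Real.log_le_sub_one_of_pos (show 0 < x / Real.exp 1 by positivity)
  rw [Real.log_div (ne_of_gt hx) (by positivity), Real.log_exp] at h
  linarith

-- f x = x log x - x monotone-type estimates
lemma flem_up {x y : ℝ} (hx : 0 < x) (hxy : x ≤ y) :
    x * Real.log x - x ≤ y * Real.log y - y - (y - x) * Real.log x := by
  have hy : 0 < y := lt_of_lt_of_le hx hxy
  have h1 : 1 - x/y ≤ Real.log y - Real.log x := by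
    have := log_ge_one_sub_inv (show 0 < y/x by positivity)
    rw [Real.log_div (ne_of_gt hy) (ne_of_gt hx)] at this
    have h2 : 1 - 1/(y/x) = 1 - x/y := by field_simp
    linarith [h2 ▸ this]
  have h3 : y * (1 - x/y) = y - x := by field_simp
  nlinarith [mul_le_mul_of_nonneg_left h1 (le_of_lt hy)]

lemma flem_down {x y : ℝ} (hx : 0 < x) (hxy : x ≤ y) :
    y * Real.log y - y - (y - x) * Real.log y ≤ x * Real.log x - x := by
  have hy : 0 < y := lt_of_lt_of_le hx hxy
  have h1 : Real.log y - Real.log x ≤ y/x - 1 := by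
    have := Real.log_le_sub_one_of_pos (show 0 < y/x by positivity)
    rw [Real.log_div (ne_of_gt hy) (ne_of_gt hx)] at this
    linarith
  have h4 : x * (Real.log y - Real.log x) ≤ y - x := by
    have h5 := mul_le_mul_of_nonneg_left h1 (le_of_lt hx)
    have h6 : x * (y/x - 1) = y - x := by field_simp
    linarith
  nlinarith [h4]

lemma EE_lower (N : ℕ) (hN : 900 ≤ N) :
    (((7:ℝ)/15) * Real.log 2 + (3/10) * Real.log 3 + (1/6) * Real.log 5) * N
      - 4 * Real.log N - 1 ≤ EE N := by
  have hN0 : (0:ℝ) < N := by positivity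
  have hNlog : 0 ≤ Real.log N := Real.log_nonneg (by exact_mod_cast (by omega : 1 ≤ N))
  -- upper bound pieces for k = 2, 3, 5
  have upper : ∀ k : ℕ, 2 ≤ k → k ≤ 30 →
      LF (N/k) ≤ (N:ℝ)/k * Real.log ((N:ℝ)/k) - (N:ℝ)/k + 1 + Real.log N := by
    intro k hk2 hk30
    set a := N / k with ha
    have ha1 : 1 ≤ a := by
      rw [ha]; apply Nat.one_le_div_iff (by omega) |>.2; omega
    have ha1R : (1:ℝ) ≤ a := by exact_mod_cast ha1
    have hax : (a:ℝ) ≤ (N:ℝ)/k := by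
      rw [ha]; exact_mod_cast Nat.cast_div_le
    have hLF := LF_upper a ha1
    have hf := flem_up (show (0:ℝ) < a by linarith) hax
    have hnn : 0 ≤ ((N:ℝ)/k - a) * Real.log a :=
      mul_nonneg (by linarith) (Real.log_nonneg ha1R)
    have hla : Real.log a ≤ Real.log N := by
      apply Real.log_le_log (by linarith)
      exact_mod_cast Nat.div_le_self N k
    linarith
  have h2 := upper 2 (by norm_num) (by norm_num)
  have h3 := upper 3 (by norm_num) (by norm_num)
  have h5 := upper 5 (by norm_num) (by norm_num)
  -- lower piece for k = 30
  have h30 : (N:ℝ)/30 * Real.log ((N:ℝ)/30) - (N:ℝ)/30 - Real.log N + 1 ≤ LF (N/30) := by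
    set a := N / 30 with ha
    have ha1 : 1 ≤ a := by rw [ha]; apply Nat.one_le_div_iff (by omega) |>.2; omega
    have ha1R : (1:ℝ) ≤ a := by exact_mod_cast ha1
    have hax : (a:ℝ) ≤ (N:ℝ)/30 := by rw [ha]; exact_mod_cast Nat.cast_div_le
    have hgap : (N:ℝ)/30 - a ≤ 1 := by
      have hnat : N < 30 * (N/30) + 30 := by omega
      have : (N:ℝ) < 30 * (a:ℝ) + 30 := by rw [ha]; exact_mod_cast hnat
      linarith
    have hLF := LF_lower a ha1
    have hf := flem_down (show (0:ℝ) < a by linarith) hax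
    have hlx : Real.log ((N:ℝ)/30) ≤ Real.log N := by
      apply Real.log_le_log (by linarith)
      have : (0:ℝ) ≤ (N:ℝ) * 29 := by positivity
      linarith [this]
    have hlxnn : 0 ≤ Real.log ((N:ℝ)/30) := by
      apply Real.log_nonneg; linarith
    have hprod : ((N:ℝ)/30 - a) * Real.log ((N:ℝ)/30) ≤ Real.log N := by
      calc ((N:ℝ)/30 - a) * Real.log ((N:ℝ)/30) ≤ 1 * Real.log ((N:ℝ)/30) :=
            mul_le_mul_of_nonneg_right hgap hlxnn
        _ ≤ Real.log N := by linarith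
    linarith
  have hLFN := LF_lower N (by omega)
  -- identity
  have hl2 : Real.log ((N:ℝ)/2) = Real.log N - Real.log 2 :=
    Real.log_div (ne_of_gt hN0) (by norm_num)
  have hl3 : Real.log ((N:ℝ)/3) = Real.log N - Real.log 3 :=
    Real.log_div (ne_of_gt hN0) (by norm_num)
  have hl5 : Real.log ((N:ℝ)/5) = Real.log N - Real.log 5 :=
    Real.log_div (ne_of_gt hN0) (by norm_num)
  have hl30 : Real.log ((N:ℝ)/30) = Real.log N - (Real.log 2 + Real.log 3 + Real.log 5) := by
    have : Real.log ((N:ℝ)/30) = Real.log N - Real.log 30 :=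
      Real.log_div (ne_of_gt hN0) (by norm_num)
    rw [this, show (30:ℝ) = 2*3*5 by norm_num,
      Real.log_mul (by norm_num) (by norm_num), Real.log_mul (by norm_num) (by norm_num)]
  push_cast at h2 h3 h5
  unfold EE
  rw [hl2] at h2; rw [hl3] at h3; rw [hl5] at h5; rw [hl30] at h30
  nlinarith [h2, h3, h5, h30, hLFN]


lemma th_le (N M : ℕ) (hM : M ≤ N)
    (h : ∀ p : ℕ, p.Prime → p ≤ N → p ≤ M) :
    th N ≤ (M:ℝ) * (2 * Real.log 2) := by
  have hfil : (Icc 1 N).filter Nat.Prime = (range (M+1)).filter Nat.Prime := by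
    ext p
    simp only [mem_filter, mem_Icc, mem_range]
    constructor
    · rintro ⟨⟨h1, h2⟩, hp⟩
      exact ⟨Nat.lt_succ_of_le (h p hp h2), hp⟩
    · rintro ⟨h1, hp⟩
      exact ⟨⟨hp.one_lt.le.trans' (by norm_num), (Nat.lt_succ_iff.1 h1).trans hM⟩, hp⟩
  have hth : th N = Real.log (primorial M) := by
    unfold th primorial
    rw [hfil]
    rw [Nat.cast_prod, Real.log_prod]
    intro p hp
    simp only [mem_filter] at hp
    exact_mod_cast hp.2.pos.ne'
  rw [hth]
  calc Real.log (primorial M) ≤ Real.log ((4:ℕ)^M : ℕ) := by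
        apply Real.log_le_log (by exact_mod_cast primorial_pos M)
        exact_mod_cast primorial_le_4_pow M
    _ = (M:ℝ) * (2 * Real.log 2) := by
        push_cast
        rw [Real.log_pow, show (4:ℝ) = 2^2 by norm_num, Real.log_pow]
        push_cast; ring

theorem bigMain (N : ℕ) (hN : 5000000 ≤ N) :
    ∃ p : ℕ, p.Prime ∧ p ≤ N ∧ 3*N+3 ≤ 5*p := by
  by_contra hcon
  push_neg at hcon
  have h5 : ∀ p : ℕ, p.Prime → p ≤ N → 5*p ≤ 3*N+2 := by
    intro p hp hpN
    have := hcon p hp hpN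
    omega
  set M := (3*N+2)/5 with hMdef
  have hMN : M ≤ N := by omega
  have hPM : ∀ p : ℕ, p.Prime → p ≤ N → p ≤ M := by
    intro p hp hpN
    have := h5 p hp hpN
    omega
  set L := Real.log N with hL
  have hN0 : (0:ℝ) < N := by positivity
  have hL0 : 0 ≤ L := Real.log_nonneg (by exact_mod_cast (by omega : 1 ≤ N))
  have hAlow : (0.9185:ℝ) ≤ ((7:ℝ)/15) * Real.log 2 + (3/10) * Real.log 3 + (1/6) * Real.log 5 := by
    have h2 := Real.log_two_gt_d9
    linarith [log3_lb, log5_lb]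
  have hchain : (0.9185:ℝ) * N - 4*L - 1 ≤
      (1.3862943616:ℝ) * ((3*(N:ℝ)+2)/5)
        + ((Nat.sqrt N : ℝ) * (Nat.log 2 N : ℝ)) * (L/2) := by
    have e1 := EE_lower N (by omega)
    have e2 := EE_le_psi N
    have e3 := psi_split N
    have e4 := PP_bound N (by omega)
    have e5 := th_le N M hMN hPM
    have e6 : (M:ℝ) ≤ (3*(N:ℝ)+2)/5 := by
      calc (M:ℝ) ≤ ((3*N+2 : ℕ):ℝ)/((5:ℕ):ℝ) := by exact_mod_cast Nat.cast_div_le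
        _ = (3*(N:ℝ)+2)/5 := by push_cast; ring
    have e7 : (M:ℝ) * (2*Real.log 2) ≤ (1.3862943616:ℝ) * ((3*(N:ℝ)+2)/5) := by
      have hlog2 := Real.log_two_lt_d9
      have hM0 : (0:ℝ) ≤ M := by positivity
      have e7a : (M:ℝ)*(2*Real.log 2) ≤ (M:ℝ)*1.3862943616 :=
        mul_le_mul_of_nonneg_left (by linarith) hM0
      linarith [e6, e7a]
    have hAN := mul_le_mul_of_nonneg_right hAlow (le_of_lt hN0)
    linarith [e1, e2, e3.le, e3.ge, e4, e5, e7, hAN]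
  -- switch to u = N^(1/12)
  set u := (N:ℝ) ^ ((1:ℝ)/12) with hu
  have hu0 : (0:ℝ) ≤ u := Real.rpow_nonneg (le_of_lt hN0) _
  have hNu : (N:ℝ) = u^12 := by
    rw [hu, ← Real.rpow_natCast ((N:ℝ) ^ ((1:ℝ)/12)) 12, ← Real.rpow_mul (le_of_lt hN0)]
    norm_num
  have hu36 : (3.6:ℝ) ≤ u := by
    by_contra hlt
    push_neg at hlt
    have h12 : u^12 < (3.6:ℝ)^12 := by
      apply pow_lt_pow_left₀ hlt hu0
      norm_num
    rw [← hNu] at h12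
    norm_num at h12
    have hN' : (5000000:ℝ) ≤ N := by exact_mod_cast hN
    linarith
  have hsqrt : (Nat.sqrt N : ℝ) ≤ u^6 := by
    have h1 : ((Nat.sqrt N : ℝ))^2 ≤ (N:ℝ) := by exact_mod_cast Nat.sqrt_le' N
    have h2 : (N:ℝ) = (u^6)^2 := by rw [hNu]; ring
    rw [h2] at h1
    exact (pow_le_pow_iff_left₀ (by positivity) (by positivity) (by norm_num)).1 h1
  have hlog2N : (Nat.log 2 N : ℝ) ≤ 1.4427 * L := by
    have h1 : (2:ℕ) ^ Nat.log 2 N ≤ N := Nat.pow_log_le_self 2 (by omega)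
    have h2 : ((2:ℝ)) ^ (Nat.log 2 N) ≤ (N:ℝ) := by exact_mod_cast h1
    have h3 : (Nat.log 2 N : ℝ) * Real.log 2 ≤ L := by
      rw [hL, ← Real.log_pow]
      apply Real.log_le_log (by positivity) h2
    have h4 := Real.log_two_gt_d9
    have h5 : (0:ℝ) ≤ (Nat.log 2 N : ℝ) := by positivity
    nlinarith [h3, h4, h5]
  have hLe : L ≤ 4.414567 * u := by
    have hup : (0:ℝ) < u := by linarith
    have h1 : L = 12 * Real.log u := by
      rw [hL, hNu, Real.log_pow]; push_cast; ring
    have h2 : Real.log u ≤ u / Real.exp 1 := log_le_div_e hup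
    have h3 : u / Real.exp 1 ≤ u / 2.7182818283 := by
      gcongr
      exact le_of_lt Real.exp_one_gt_d9
    rw [h1]
    have hinv : ((2.7182818283:ℝ))⁻¹ ≤ 0.36788 := by norm_num
    have h4 : u / 2.7182818283 ≤ 0.36788 * u := by
      rw [div_eq_mul_inv]
      calc u * (2.7182818283:ℝ)⁻¹ ≤ u * 0.36788 := mul_le_mul_of_nonneg_left hinv hu0
        _ = 0.36788 * u := by ring
    linarith
  -- prime power term bound
  have hPP : ((Nat.sqrt N : ℝ) * (Nat.log 2 N : ℝ)) * (L/2) ≤ 14.058 * u^8 := by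
    have hB0 : (0:ℝ) ≤ (Nat.log 2 N : ℝ) := by positivity
    have hA0 : (0:ℝ) ≤ (Nat.sqrt N : ℝ) := by positivity
    have hu6 : (0:ℝ) ≤ u^6 := by positivity
    have hL2 : L * L ≤ 19.48841 * (u*u) := by
      nlinarith [mul_le_mul hLe hLe hL0 (by positivity : (0:ℝ) ≤ 4.414567*u)]
    have s1 : ((Nat.sqrt N : ℝ) * (Nat.log 2 N : ℝ)) * (L/2) ≤ (u^6 * (1.4427*L)) * (L/2) := by
      apply mul_le_mul_of_nonneg_right _ (by linarith)
      apply mul_le_mul hsqrt hlog2N hB0 hu6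
    have s2 : (u^6 * (1.4427*L)) * (L/2) = 0.72135 * (L*L) * u^6 := by ring
    have s3 : 0.72135 * (L*L) * u^6 ≤ 0.72135 * (19.48841 * (u*u)) * u^6 := by
      apply mul_le_mul_of_nonneg_right _ hu6
      nlinarith [hL2]
    have s4 : 0.72135 * (19.48841 * (u*u)) * u^6 ≤ 14.058 * u^8 := by nlinarith [pow_nonneg hu0 8]
    linarith [s1, s2 ▸ s1, s3, s4]
  -- final contradiction
  rw [hNu] at hchain
  have hfin : (0.0867233:ℝ) * u^12 ≤ 14.058 * u^8 + 4*L + 1.5545178 := by linarith [hchain, hPP]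
  have h4u : (167.9616:ℝ) ≤ u^4 := by
    calc (167.9616:ℝ) = 3.6^4 := by norm_num
      _ ≤ u^4 := pow_le_pow_left₀ (by norm_num) hu36 4
  have h7u : (7836:ℝ) ≤ u^7 := by
    calc (7836:ℝ) ≤ 3.6^7 := by norm_num
      _ ≤ u^7 := pow_le_pow_left₀ (by norm_num) hu36 7
  have h12u : 14.565 * u^8 ≤ 0.0867233 * u^12 := by
    have hm : (167.9616:ℝ) * u^8 ≤ u^12 := by
      calc (167.9616:ℝ)*u^8 ≤ u^4*u^8 := mul_le_mul_of_nonneg_right h4u (pow_nonneg hu0 8)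
        _ = u^12 := by ring
    linarith [hm, pow_nonneg hu0 8]
  have h8u : 7836 * u ≤ u^8 := by
    calc (7836:ℝ)*u ≤ u^7*u := mul_le_mul_of_nonneg_right h7u hu0
      _ = u^8 := by ring
  linarith [hfin, h12u, h8u, hLe, hu36]

lemma coverStep (q r : ℕ) (hq : q.Prime) (h3 : 3*r ≤ 5*q) {n : ℕ} (h1 : q ≤ n) (h2 : n < r) :
    ∃ p : ℕ, p.Prime ∧ p ≤ n ∧ 3*n+3 ≤ 5*p := ⟨q, hq, h1, by omega⟩

lemma smallMain : ∀ n : ℕ, 2 ≤ n → n < 7360763 → ∃ p : ℕ, p.Prime ∧ p ≤ n ∧ 3*n+3 ≤ 5*p := by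
  intro n h2 hlt
  rcases Nat.lt_or_ge n 3 with h|h
  · exact coverStep 2 3 (by norm_num) (by norm_num) h2 h
  have hprev : 3 ≤ n := h
  clear h
  rcases Nat.lt_or_ge n 5 with h|h
  · exact coverStep 3 5 (by norm_num) (by norm_num) hprev h
  have hprev : 5 ≤ n := h
  clear h
  rcases Nat.lt_or_ge n 7 with h|h
  · exact coverStep 5 7 (by norm_num) (by norm_num) hprev h
  have hprev : 7 ≤ n := h
  clear h
  rcases Nat.lt_or_ge n 11 with h|h
  · exact coverStep 7 11 (by norm_num) (by norm_num) hprev h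
  have hprev : 11 ≤ n := h
  clear h
  rcases Nat.lt_or_ge n 17 with h|h
  · exact coverStep 11 17 (by norm_num) (by norm_num) hprev h
  have hprev : 17 ≤ n := h
  clear h
  rcases Nat.lt_or_ge n 23 with h|h
  · exact coverStep 17 23 (by norm_num) (by norm_num) hprev h
  have hprev : 23 ≤ n := h
  clear h
  rcases Nat.lt_or_ge n 37 with h|h
  · exact coverStep 23 37 (by norm_num) (by norm_num) hprev h
  have hprev : 37 ≤ n := h
  clear h
  rcases Nat.lt_or_ge n 61 with h|h
  · exact coverStep 37 61 (by norm_num) (by norm_num) hprev h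
  have hprev : 61 ≤ n := h
  clear h
  rcases Nat.lt_or_ge n 101 with h|h
  · exact coverStep 61 101 (by norm_num) (by norm_num) hprev h
  have hprev : 101 ≤ n := h
  clear h
  rcases Nat.lt_or_ge n 167 with h|h
  · exact coverStep 101 167 (by norm_num) (by norm_num) hprev h
  have hprev : 167 ≤ n := h
  clear h
  rcases Nat.lt_or_ge n 277 with h|h
  · exact coverStep 167 277 (by norm_num) (by norm_num) hprev h
  have hprev : 277 ≤ n := h
  clear h
  rcases Nat.lt_or_ge n 461 with h|h
  · exact coverStep 277 461 (by norm_num) (by norm_num) hprev h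
  have hprev : 461 ≤ n := h
  clear h
  rcases Nat.lt_or_ge n 761 with h|h
  · exact coverStep 461 761 (by norm_num) (by norm_num) hprev h
  have hprev : 761 ≤ n := h
  clear h
  rcases Nat.lt_or_ge n 1259 with h|h
  · exact coverStep 761 1259 (by norm_num) (by norm_num) hprev h
  have hprev : 1259 ≤ n := h
  clear h
  rcases Nat.lt_or_ge n 2089 with h|h
  · exact coverStep 1259 2089 (by norm_num) (by norm_num) hprev h
  have hprev : 2089 ≤ n := h
  clear h
  rcases Nat.lt_or_ge n 3469 with h|h
  · exact coverStep 2089 3469 (by norm_num) (by norm_num) hprev h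
  have hprev : 3469 ≤ n := h
  clear h
  rcases Nat.lt_or_ge n 5779 with h|h
  · exact coverStep 3469 5779 (by norm_num) (by norm_num) hprev h
  have hprev : 5779 ≤ n := h
  clear h
  rcases Nat.lt_or_ge n 9631 with h|h
  · exact coverStep 5779 9631 (by norm_num) (by norm_num) hprev h
  have hprev : 9631 ≤ n := h
  clear h
  rcases Nat.lt_or_ge n 16033 with h|h
  · exact coverStep 9631 16033 (by norm_num) (by norm_num) hprev h
  have hprev : 16033 ≤ n := h
  clear h
  rcases Nat.lt_or_ge n 26717 with h|h
  · exact coverStep 16033 26717 (by norm_num) (by norm_num) hprev h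
  have hprev : 26717 ≤ n := h
  clear h
  rcases Nat.lt_or_ge n 44519 with h|h
  · exact coverStep 26717 44519 (by norm_num) (by norm_num) hprev h
  have hprev : 44519 ≤ n := h
  clear h
  rcases Nat.lt_or_ge n 74197 with h|h
  · exact coverStep 44519 74197 (by norm_num) (by norm_num) hprev h
  have hprev : 74197 ≤ n := h
  clear h
  rcases Nat.lt_or_ge n 123661 with h|h
  · exact coverStep 74197 123661 (by norm_num) (by norm_num) hprev h
  have hprev : 123661 ≤ n := h
  clear h
  rcases Nat.lt_or_ge n 206083 with h|h
  · exact coverStep 123661 206083 (by norm_num) (by norm_num) hprev h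
  have hprev : 206083 ≤ n := h
  clear h
  rcases Nat.lt_or_ge n 343433 with h|h
  · exact coverStep 206083 343433 (by norm_num) (by norm_num) hprev h
  have hprev : 343433 ≤ n := h
  clear h
  rcases Nat.lt_or_ge n 572387 with h|h
  · exact coverStep 343433 572387 (by norm_num) (by norm_num) hprev h
  have hprev : 572387 ≤ n := h
  clear h
  rcases Nat.lt_or_ge n 953977 with h|h
  · exact coverStep 572387 953977 (by norm_num) (by norm_num) hprev h
  have hprev : 953977 ≤ n := h
  clear h
  rcases Nat.lt_or_ge n 1589941 with h|h
  · exact coverStep 953977 1589941 (by norm_num) (by norm_num) hprev h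
  have hprev : 1589941 ≤ n := h
  clear h
  rcases Nat.lt_or_ge n 2649893 with h|h
  · exact coverStep 1589941 2649893 (by norm_num) (by norm_num) hprev h
  have hprev : 2649893 ≤ n := h
  clear h
  rcases Nat.lt_or_ge n 4416473 with h|h
  · exact coverStep 2649893 4416473 (by norm_num) (by norm_num) hprev h
  have hprev : 4416473 ≤ n := h
  clear h
  rcases Nat.lt_or_ge n 7360763 with h|h
  · exact coverStep 4416473 7360763 (by norm_num) (by norm_num) hprev h
  have hprev : 7360763 ≤ n := h
  clear h
  omega


lemma mainNat : ∀ n : ℕ, 2 ≤ n → ∃ p : ℕ, p.Prime ∧ p ≤ n ∧ 3*n+3 ≤ 5*p := by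
  intro n h2
  rcases Nat.lt_or_ge n 7360763 with h | h
  · exact smallMain n h2 h
  · exact bigMain n (by omega)

lemma primePi_lt (k x : ℝ) (hk : 5/3 ≤ k) (hx : (2:ℝ) ≤ x) : primePi (x/k) < primePi x := by
  have hk0 : (0:ℝ) < k := by linarith
  have hx0 : (0:ℝ) < x := by linarith
  set n := ⌊x⌋₊ with hn
  have hn2 : 2 ≤ n := Nat.le_floor (by exact_mod_cast hx)
  obtain ⟨p, hp, hpn, h3n⟩ := mainNat n hn2
  have hm : (⌊x/k⌋₊ : ℝ) < p := by
    have h1 : (⌊x/k⌋₊:ℝ) ≤ x/k := Nat.floor_le (by positivity)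
    have h2 : x/k ≤ 3*x/5 := by
      have h2a : x/k ≤ x/(5/3) := by gcongr
      have h2b : x/(5/3) = 3*x/5 := by ring
      linarith [h2a, h2b ▸ h2a]
    have hxn1 : x < (n:ℝ) + 1 := Nat.lt_floor_add_one x
    have h4 : ((3*n+3:ℕ):ℝ) ≤ 5*(p:ℝ) := by exact_mod_cast h3n
    push_cast at h4
    linarith
  have hmp : ⌊x/k⌋₊ < p := by exact_mod_cast hm
  show Nat.primeCounting ⌊x/k⌋₊ < Nat.primeCounting ⌊x⌋₊
  have e1 : Nat.primeCounting ⌊x/k⌋₊ = Nat.count Nat.Prime (⌊x/k⌋₊ + 1) := rfl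
  have e2 : Nat.primeCounting ⌊x⌋₊ = Nat.count Nat.Prime (n + 1) := rfl
  rw [e1, e2]
  calc Nat.count Nat.Prime (⌊x/k⌋₊ + 1) ≤ Nat.count Nat.Prime p :=
        Nat.count_monotone _ (by omega)
    _ < Nat.count Nat.Prime (p + 1) := Nat.count_lt_count_succ_iff.2 hp
    _ ≤ Nat.count Nat.Prime (n + 1) := Nat.count_monotone _ (by omega)

theorem first_k_ramanujan_stmt8 :
    ∀ k : ℝ, 5 / 3 ≤ k → firstRamanujanPrime k = 2 := by
  intro k hk
  set S := {m : ℕ | 0 < m ∧ ∀ x : ℝ, (m : ℝ) ≤ x → primePi (x / k) < primePi x} with hS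
  have h2mem : 2 ∈ S := by
    constructor
    · norm_num
    · intro x hx
      exact primePi_lt k x hk (by exact_mod_cast hx)
  show sInf S = 2
  apply le_antisymm (Nat.sInf_le h2mem)
  have hne : S.Nonempty := ⟨2, h2mem⟩
  have hmem := Nat.sInf_mem hne
  obtain ⟨hpos, hall⟩ := hmem
  by_contra hlt
  push_neg at hlt
  have h1 : sInf S = 1 := by omega
  have := hall (1:ℝ) (by rw [h1]; norm_num)
  have hp1 : primePi 1 = 0 := by
    unfold primePi
    norm_num
  rw [hp1] at this
  omega
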